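/- For a path h from a to b of length L with extra point c = b ± 1, let i_1 > i_2 > ... > i_N be the positions of the scoring (peak) vertices. Then i_1 + i_2 + ... + i_N = (1/2)(L ± (a-b)) + 2·wt(h), where the sign ± matches c = b ± 1 and wt is the slanted-coordinate weight. -/
import Mathlib


open Finset

namespace Melzer

/-- Height of the path after `i` steps, starting at `a`; `true` = NE step (+1),
`false` = SE step (-1). -/
def ht (a : ℤ) {L : ℕ} (s : Fin L → Bool) (i : ℕ) : ℤ :=
  a + ∑ j ∈ Finset.range i, (if h : j < L then (if s ⟨j, h⟩ then 1 else -1) else 0)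

/-- `s` encodes a path in `P^{p'}_{a,b}(L)`: all heights lie in `[1, p'-1]` and
the path ends at `b`. -/
def isPath (p' : ℕ) (a b : ℤ) {L : ℕ} (s : Fin L → Bool) : Prop :=
  (∀ i ∈ Finset.range (L + 1), 1 ≤ ht a s i ∧ ht a s i ≤ (p' : ℤ) - 1) ∧ ht a s L = b

instance decIsPath (p' : ℕ) (a b : ℤ) {L : ℕ} (s : Fin L → Bool) :
    Decidable (isPath p' a b s) := by
  unfold isPath; infer_instance

/-- Heights including the extra point `h_{L+1} = c`. -/
def htc (a : ℤ) {L : ℕ} (s : Fin L → Bool) (c : ℤ) (i : ℕ) : ℤ :=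
  if i ≤ L then ht a s i else c

/-- Regime-III weight: `i/2` at each straight vertex, `0` at peaks. -/
def wtIII (a : ℤ) {L : ℕ} (s : Fin L → Bool) (c : ℤ) : ℚ :=
  ∑ i ∈ Finset.Icc 1 L, if htc a s c (i + 1) = htc a s c (i - 1) then 0 else (i : ℚ) / 2

/-- Regime-II weight: `i/2` at each peak vertex, `0` at straight vertices. -/
def wtII (a : ℤ) {L : ℕ} (s : Fin L → Bool) (c : ℤ) : ℚ :=
  ∑ i ∈ Finset.Icc 1 L, if htc a s c (i + 1) = htc a s c (i - 1) then (i : ℚ) / 2 else 0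

/-- Slanted-coordinate weight: at a peak-down vertex the contribution is
`x = (i - (h_i - a))/2`, at a peak-up vertex it is `y = (i + (h_i - a))/2`. -/
def wtSl (a : ℤ) {L : ℕ} (s : Fin L → Bool) (c : ℤ) : ℚ :=
  ∑ i ∈ Finset.Icc 1 L,
    if htc a s c (i + 1) = htc a s c (i - 1) then
      (if htc a s c (i - 1) < htc a s c i then ((i : ℚ) - ((ht a s i - a : ℤ) : ℚ)) / 2
       else ((i : ℚ) + ((ht a s i - a : ℤ) : ℚ)) / 2)
    else 0

/-- `X^{p'}_L(a,b,c;q)`, the ABF (regime-III) finitised generating function. -/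
noncomputable def X (p' : ℕ) (a b c : ℤ) (L : ℕ) (q : ℝ) : ℝ :=
  ∑ s ∈ Finset.univ.filter (fun s : Fin L → Bool => isPath p' a b s),
    q ^ ((wtIII a s c : ℚ) : ℝ)

/-- `x^{p'}_L(a,b,c;q)`, the parafermion (regime-II) finitised generating function. -/
noncomputable def xPara (p' : ℕ) (a b c : ℤ) (L : ℕ) (q : ℝ) : ℝ :=
  ∑ s ∈ Finset.univ.filter (fun s : Fin L → Bool => isPath p' a b s),
    q ^ ((wtII a s c : ℚ) : ℝ)

/-- `χ^{1,p'}_{a,b,c}(L;q)`, generating function for the slanted-coordinate weight. -/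
noncomputable def chiP (p' : ℕ) (a b c : ℤ) (L : ℕ) (q : ℝ) : ℝ :=
  ∑ s ∈ Finset.univ.filter (fun s : Fin L → Bool => isPath p' a b s),
    q ^ ((wtSl a s c : ℚ) : ℝ)

/-- `χ^{p'-1,p'}_{a,b,c}(L;q) = q^{(1/4)(a-b)(a-c)} X^{p'}_L(a,b,c;q)`. -/
noncomputable def chiABF (p' : ℕ) (a b c : ℤ) (L : ℕ) (q : ℝ) : ℝ :=
  q ^ ((((a - b) * (a - c) : ℤ) : ℝ) / 4) * X p' a b c L q

/-- Extended direction sequence: index `0` is the pre-segment (NE iff `e = 1`),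
indices `1..L` are the path segments, index `L+1` is the post-segment (NE iff `f = 0`). -/
def dirsExt {L : ℕ} (s : Fin L → Bool) (e f : ℕ) (i : ℕ) : Bool :=
  if i = 0 then e == 1
  else if h : i - 1 < L then s ⟨i - 1, h⟩
  else f == 0

def runsAux : Bool → ℕ → List Bool → List ℕ
  | _, n, [] => [n]
  | d, n, x :: xs => if x = d then runsAux d (n + 1) xs else n :: runsAux x 1 xs

/-- Run lengths of a list of directions. -/
def runLengths : List Bool → List ℕ
  | [] => []
  | x :: xs => runsAux x 1 xs

/-- The `(e,f)`-striking sequence `(w_1, …, w_l)` of the path `s`. -/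
def strike {L : ℕ} (s : Fin L → Bool) (e f : ℕ) : List ℕ :=
  let r := runLengths (List.ofFn fun i : Fin (L + 2) => dirsExt s e f (i : ℕ))
  r.mapIdx fun i x => x - (if i = 0 then 1 else 0) - (if i = r.length - 1 then 1 else 0)

/-- `m^{(e,f)}(h) = L - l + 2` where `l` is the length of the striking sequence. -/
def mEF {L : ℕ} (s : Fin L → Bool) (e f : ℕ) : ℤ :=
  (L : ℤ) + 2 - (strike s e f).length

/-- The striking-sequence weight
`wt^{(e,f)}(h) = ∑_{i=2}^{l-1} (w_{i-1} + w_{i-3} + ⋯ + w_{1 + (i mod 2)})`. -/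
def wtEF {L : ℕ} (s : Fin L → Bool) (e f : ℕ) : ℕ :=
  ∑ i ∈ Finset.Icc 2 ((strike s e f).length - 1), ∑ j ∈ Finset.Icc 1 (i - 1),
    if j % 2 = (i - 1) % 2 then (strike s e f).getD (j - 1) 0 else 0

/-- `χ^{1,p'}_{a,b,e,f}(L,m;q)`, the restricted generating function. -/
noncomputable def chiRes (p' : ℕ) (a b : ℤ) (e f : ℕ) (L : ℕ) (m : ℤ) (q : ℝ) : ℝ :=
  ∑ s ∈ Finset.univ.filter
      (fun s : Fin L → Bool => isPath p' a b s ∧ mEF s e f = m),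
    q ^ ((wtEF s e f : ℕ) : ℝ)

/-- The Gaussian (q-binomial) polynomial, via the Pascal recurrence. -/
noncomputable def qbinom (q : ℝ) : ℕ → ℕ → ℝ
  | _, 0 => 1
  | 0, _ + 1 => 0
  | A + 1, B + 1 => qbinom q A B + q ^ (B + 1) * qbinom q A (B + 1)

/-- The `B`-transform on striking sequences:
`(w_1, w_2, …, w_{l-1}, w_l) ↦ (w_1, w_2+1, …, w_{l-1}+1, w_l)`. -/
def btransSeq (ws : List ℕ) : List ℕ :=
  ws.mapIdx fun i x => if i = 0 ∨ i = ws.length - 1 then x else x + 1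

/-- Particle insertion on striking sequences:
`(w_1, w_2, …, w_l) ↦ (0, 1, w_1+1, w_2, …, w_l)`. -/
def insertP : List ℕ → List ℕ
  | [] => []
  | w :: rest => 0 :: 1 :: (w + 1) :: rest

/-- A single particle move: in the extended direction sequence a window
`(x, !x, x, x)` (two scoring vertices followed by a non-scoring one) is replaced
by `(x, x, !x, x)` (a non-scoring vertex followed by two scoring ones). -/
def moveRel {L : ℕ} (e f : ℕ) (s s' : Fin L → Bool) : Prop :=
  ∃ j, j + 3 ≤ L + 1 ∧
    (∀ i, i ≠ j + 1 → i ≠ j + 2 → dirsExt s e f i = dirsExt s' e f i) ∧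
    dirsExt s e f (j + 1) = !(dirsExt s e f j) ∧
    dirsExt s e f (j + 2) = dirsExt s e f j ∧
    dirsExt s e f (j + 3) = dirsExt s e f j ∧
    dirsExt s' e f (j + 1) = dirsExt s e f j ∧
    dirsExt s' e f (j + 2) = !(dirsExt s e f j)

lemma key (g : ℕ → ℤ) :
    ∀ n : ℕ, (∀ i < n + 1, g (i + 1) - g i = 1 ∨ g (i + 1) - g i = -1) →
    2 * ∑ i ∈ Finset.Icc 1 n,
        (if g (i + 1) = g (i - 1) then (g i - g (i - 1)) * (g i - g 0) else 0)
      = (n : ℤ) + (g (n + 1) - g n) * (g 0 - g n) := by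
  intro n
  induction n with
  | zero => intro _; simp
  | succ n ih =>
    intro hstep
    have h1 := ih (fun i hi => hstep i (by omega))
    have d1 := hstep n (by omega)
    have d2 := hstep (n + 1) (by omega)
    rw [Finset.sum_Icc_succ_top (by omega)]
    have hidx : n + 1 - 1 = n := by omega
    rw [hidx]
    by_cases hp : g (n + 1 + 1) = g n <;>
      rw [mul_add, h1] <;>
      rcases d1 with e1 | e1 <;> rcases d2 with e2 | e2 <;>
      simp only [hp, if_true, if_false, if_pos, if_neg, not_false_iff] <;>
      first
        | (exfalso; omega)
        | (have e1' : g (n + 1) = g n + 1 := by omega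
           have e2' : g (n + 1 + 1) = g n + 2 := by omega
           simp only [e2', e1']; push_cast; ring)
        | (have e1' : g (n + 1) = g n - 1 := by omega
           have e2' : g (n + 1 + 1) = g n - 2 := by omega
           simp only [e2', e1']; push_cast; ring)
        | (have e1' : g (n + 1) = g n + 1 := by omega
           have e2' : g (n + 1 + 1) = g n := by omega
           simp only [e2', e1']; push_cast; ring)
        | (have e1' : g (n + 1) = g n - 1 := by omega
           have e2' : g (n + 1 + 1) = g n := by omega
           simp only [e2', e1']; push_cast; ring)

/-- The sum of the positions of the scoring (peak) vertices equals
`(1/2)(L ± (a-b)) + 2·wt(h)`, the sign matching `c = b ± 1`. -/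
theorem statement3 (p' L : ℕ) (a b c ε : ℤ) (s : Fin L → Bool)
    (hpath : isPath p' a b s)
    (hε : ε = 1 ∨ ε = -1) (hc : c = b + ε) (hc1 : 1 ≤ c) (hc2 : c ≤ (p' : ℤ) - 1) :
    (∑ i ∈ Finset.Icc 1 L,
        if htc a s c (i + 1) = htc a s c (i - 1) then (i : ℚ) else 0)
      = ((L : ℚ) + (ε : ℚ) * ((a - b : ℤ) : ℚ)) / 2 + 2 * wtSl a s c := by
  set g : ℕ → ℤ := htc a s c with hg
  have hgle : ∀ i, i ≤ L → g i = ht a s i := by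
    intro i hi; simp [hg, htc, hi]
  have hg0 : g 0 = a := by
    rw [hgle 0 (by omega)]; simp [ht]
  have hgL : g L = b := by rw [hgle L le_rfl]; exact hpath.2
  have hgL1 : g (L + 1) = c := by simp [hg, htc]
  have hstep : ∀ i < L + 1, g (i + 1) - g i = 1 ∨ g (i + 1) - g i = -1 := by
    intro i hi
    by_cases hiL : i < L
    · rw [hgle (i + 1) (by omega), hgle i (by omega)]
      have : ht a s (i + 1) = ht a s i + (if s ⟨i, hiL⟩ then 1 else -1) := by
        simp [ht, Finset.sum_range_succ, hiL]
        ring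
      rw [this]
      by_cases hs : s ⟨i, hiL⟩ <;> simp [hs]
    · have hiL' : i = L := by omega
      subst hiL'
      rw [hgL1, hgL, hc]
      rcases hε with h | h <;> simp [h]
  have hkey := key g L hstep
  rw [hgL1, hgL, hc] at hkey
  have hterm : ∀ i ∈ Finset.Icc 1 L,
      (if htc a s c (i + 1) = htc a s c (i - 1) then (i : ℚ) else 0)
      = 2 * (if htc a s c (i + 1) = htc a s c (i - 1) then
          (if htc a s c (i - 1) < htc a s c i then ((i : ℚ) - ((ht a s i - a : ℤ) : ℚ)) / 2
           else ((i : ℚ) + ((ht a s i - a : ℤ) : ℚ)) / 2)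
         else 0)
        + (((if g (i + 1) = g (i - 1) then (g i - g (i - 1)) * (g i - g 0) else 0 : ℤ)) : ℚ) := by
    intro i hi
    simp only [Finset.mem_Icc] at hi
    have hcond : (htc a s c (i + 1) = htc a s c (i - 1)) ↔ (g (i + 1) = g (i - 1)) := Iff.rfl
    by_cases hp : g (i + 1) = g (i - 1)
    · have hgi : g i = ht a s i := hgle i hi.2
      have hd := hstep (i - 1) (by omega)
      have hii : i - 1 + 1 = i := by omega
      rw [hii] at hd
      rw [if_pos hp, if_pos hp, if_pos hp]
      rcases hd with hd | hd
      · have hlt : htc a s c (i - 1) < htc a s c i := by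
          show g (i - 1) < g i; omega
        rw [if_pos hlt, hd, one_mul, hg0, hgi]
        push_cast
        ring
      · have hlt : ¬ htc a s c (i - 1) < htc a s c i := by
          show ¬ g (i - 1) < g i; omega
        rw [if_neg hlt, hd, hg0, hgi]
        push_cast
        ring
    · rw [if_neg hp, if_neg hp, if_neg hp]
      simp
  have hcast : ((∑ i ∈ Finset.Icc 1 L,
      (if g (i + 1) = g (i - 1) then (g i - g (i - 1)) * (g i - g 0) else 0) : ℤ) : ℚ)
      = ((L : ℚ) + (ε : ℚ) * ((a - b : ℤ) : ℚ)) / 2 := by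
    have h2 : ((2 * ∑ i ∈ Finset.Icc 1 L,
        (if g (i + 1) = g (i - 1) then (g i - g (i - 1)) * (g i - g 0) else 0) : ℤ) : ℚ)
        = (((L : ℤ) + (b + ε - b) * (a - b) : ℤ) : ℚ) := by rw [hkey, hg0]
    push_cast at h2 ⊢
    linarith
  rw [Finset.sum_congr rfl hterm, Finset.sum_add_distrib, ← Finset.mul_sum, ← Int.cast_sum, hcast]
  unfold wtSl
  ring

end Melzer
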